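/- Let 0 ≤ α < π/2 and H = [H_{i,j}]_{i,j=1}^n ∈ M_n(M_k) with numerical range contained in S_α. Then ((Σ_{i=1}^n |det H_{i,i}|)/n)^n ≥ (cos α)^{nk} |det H|. -/

import Mathlib

open Matrix BigOperators ComplexOrder

/-- The sector S_α in the complex plane. -/
noncomputable def sector (α : ℝ) : Set ℂ := {z | 0 < z.re ∧ |z.im| ≤ z.re * Real.tan α}

/-- Numerical range of a complex matrix. -/
noncomputable def numRange {I : Type*} [Fintype I] (A : Matrix I I ℂ) : Set ℂ :=
  {z | ∃ x : I → ℂ, star x ⬝ᵥ x = 1 ∧ star x ⬝ᵥ (A *ᵥ x) = z}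

namespace Stmt10Aux

variable {I : Type*} [Fintype I] [DecidableEq I]

lemma conjTranspose_form (M : Matrix I I ℂ) (x : I → ℂ) :
    star x ⬝ᵥ (Mᴴ *ᵥ x) = star (star x ⬝ᵥ (M *ᵥ x)) := by
  rw [star_dotProduct, star_mulVec, conjTranspose_conjTranspose]
  rw [dotProduct_mulVec]

noncomputable def ReM (M : Matrix I I ℂ) : Matrix I I ℂ := (2:ℂ)⁻¹ • (M + Mᴴ)
noncomputable def ImM (M : Matrix I I ℂ) : Matrix I I ℂ := (-(2:ℂ)⁻¹ * Complex.I) • (M - Mᴴ)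

lemma reM_form (M : Matrix I I ℂ) (x : I → ℂ) :
    star x ⬝ᵥ (ReM M *ᵥ x) = ((star x ⬝ᵥ (M *ᵥ x)).re : ℂ) := by
  rw [ReM, smul_mulVec, add_mulVec, dotProduct_smul, dotProduct_add,
    conjTranspose_form]
  rw [show star (star x ⬝ᵥ (M *ᵥ x)) = (starRingEnd ℂ) (star x ⬝ᵥ (M *ᵥ x)) from rfl,
    Complex.add_conj, smul_eq_mul]
  push_cast
  ring

lemma imM_form (M : Matrix I I ℂ) (x : I → ℂ) :
    star x ⬝ᵥ (ImM M *ᵥ x) = ((star x ⬝ᵥ (M *ᵥ x)).im : ℂ) := by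
  rw [ImM, smul_mulVec, sub_mulVec, dotProduct_smul, dotProduct_sub,
    conjTranspose_form]
  rw [show star (star x ⬝ᵥ (M *ᵥ x)) = (starRingEnd ℂ) (star x ⬝ᵥ (M *ᵥ x)) from rfl,
    Complex.sub_conj, smul_eq_mul]
  ring_nf
  rw [Complex.I_sq]
  push_cast
  ring

lemma reM_isHermitian (M : Matrix I I ℂ) : (ReM M).IsHermitian := by
  unfold ReM
  unfold IsHermitian
  rw [conjTranspose_smul, conjTranspose_add, conjTranspose_conjTranspose]
  simp [add_comm]

lemma imM_isHermitian (M : Matrix I I ℂ) : (ImM M).IsHermitian := by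
  unfold ImM IsHermitian
  rw [conjTranspose_smul, conjTranspose_sub, conjTranspose_conjTranspose]
  simp [Complex.ext_iff]
  ext i j <;> simp <;> ring

lemma decompose (M : Matrix I I ℂ) : M = ReM M + Complex.I • ImM M := by
  unfold ReM ImM
  rw [smul_smul, show Complex.I * (-(2:ℂ)⁻¹ * Complex.I) = (2:ℂ)⁻¹ by
    rw [show Complex.I * (-(2:ℂ)⁻¹ * Complex.I) = -(2:ℂ)⁻¹ * (Complex.I*Complex.I) by ring,
      Complex.I_mul_I]; ring]
  module


lemma onb_unit (b : OrthonormalBasis I ℂ (EuclideanSpace ℂ I)) (i : I) :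
    star ⇑(b i) ⬝ᵥ ⇑(b i) = 1 := by
  have h := b.orthonormal.1 i
  have : (inner ℂ (b i) (b i) : ℂ) = 1 := by
    rw [inner_self_eq_norm_sq_to_K, h]; norm_num
  rw [EuclideanSpace.inner_eq_star_dotProduct] at this
  rwa [dotProduct_comm] at this

/-- eigenvalues of a Hermitian matrix written via eigenvectors, with dot products -/
lemma eig_as_form {A : Matrix I I ℂ} (hA : A.IsHermitian) (i : I) :
    (hA.eigenvalues i : ℝ) =
      (star ⇑(hA.eigenvectorBasis i) ⬝ᵥ (A *ᵥ ⇑(hA.eigenvectorBasis i))).re :=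
  hA.eigenvalues_eq i

/-- If `P` and `1 - P` are PSD then `|det (1-P)| ≤ 1`. -/
lemma abs_det_le_one {P : Matrix I I ℂ} (hP : P.PosSemidef)
    (h1 : (1 - P).PosSemidef) : ‖(1 - P).det‖ ≤ 1 := by
  have h := h1.1
  rw [h.det_eq_prod_eigenvalues]
  rw [norm_prod]
  refine Finset.prod_le_one (fun i _ => by positivity) (fun i _ => ?_)
  refine le_trans (le_of_eq ((Complex.norm_real _).trans (Real.norm_eq_abs _))) (abs_le.mpr ⟨?_, ?_⟩) <;>
    simp only [Algebra.algebraMap_self, RingHom.id_apply]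
  · have hnn : (0:ℝ) ≤ h.eigenvalues i := h1.eigenvalues_nonneg i
    linarith
  have hval := eig_as_form h i
  set v := ⇑(h.eigenvectorBasis i) with hv
  have hsub : (1 - P) *ᵥ v = v - P *ᵥ v := by rw [sub_mulVec, one_mulVec]
  have hdot : star v ⬝ᵥ ((1 - P) *ᵥ v) = 1 - star v ⬝ᵥ (P *ᵥ v) := by
    rw [hsub, dotProduct_sub, onb_unit]
  have hre : (h.eigenvalues i : ℝ) = 1 - (star v ⬝ᵥ (P *ᵥ v)).re := by
    rw [hval, hdot]; simp
  have := hP.re_dotProduct_nonneg v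
  simp only [RCLike.re_to_complex] at this
  linarith

/-- sqrt package for a positive definite matrix -/
lemma sqrt_package {Q : Matrix I I ℂ} (hQ : Q.PosDef) :
    ∃ S T : Matrix I I ℂ, S * S = Q ∧ Sᴴ = S ∧ Tᴴ = T ∧ S * T = 1 ∧ T * S = 1 := by
  obtain ⟨S, hSherm, hSS⟩ : ∃ S : Matrix I I ℂ, S.IsHermitian ∧ S * S = Q :=
    by open scoped MatrixOrder in
      exact ⟨CFC.sqrt Q, (CFC.sqrt_nonneg Q).posSemidef.1,
        CFC.sqrt_mul_sqrt_self Q hQ.posSemidef.nonneg⟩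
  have hdet : IsUnit S.det := by
    have : S.det * S.det = Q.det := by rw [← det_mul, hSS]
    have hQdet : Q.det ≠ 0 := hQ.det_pos.ne'
    exact isUnit_iff_ne_zero.mpr (fun h => hQdet (by rw [← this, h, mul_zero]))
  refine ⟨S, S⁻¹, hSS, hSherm, ?_, mul_nonsing_inv S hdet, nonsing_inv_mul S hdet⟩
  rw [conjTranspose_nonsing_inv, hSherm]

/-- monotonicity: if `Q` is PD, `R` PSD, `Q - R` PSD then `|det (Q-R)| ≤ |det Q|`. -/
lemma abs_det_sub_le {Q R : Matrix I I ℂ} (hQ : Q.PosDef) (hR : R.PosSemidef)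
    (hQR : (Q - R).PosSemidef) : ‖(Q - R).det‖ ≤ ‖Q.det‖ := by
  obtain ⟨S, T, hSS, hSh, hTh, hST, hTS⟩ := sqrt_package hQ
  set K := T * R * T with hK
  have hKpsd : K.PosSemidef := by
    have := hR.conjTranspose_mul_mul_same T
    rwa [hTh] at this
  have hTQT : T * Q * T = 1 := by
    rw [← hSS, show T * (S * S) * T = (T * S) * (S * T) by simp [Matrix.mul_assoc],
      hTS, hST, one_mul]
  have h1K : 1 - K = T * (Q - R) * T := by
    rw [Matrix.mul_sub, Matrix.sub_mul, hTQT]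
  have h1Kpsd : (1 - K).PosSemidef := by
    rw [h1K]
    nth_rewrite 1 [← hTh]
    exact hQR.conjTranspose_mul_mul_same T
  have hSKS : S * K * S = R := by
    rw [hK, show S * (T * R * T) * S = (S * T) * R * (T * S) by simp [Matrix.mul_assoc],
      hST, hTS, one_mul, Matrix.mul_one]
  have hfact : Q - R = S * (1 - K) * S := by
    rw [Matrix.mul_sub, Matrix.sub_mul, Matrix.mul_one, hSKS, hSS]
  have hdet : (Q - R).det = Q.det * (1 - K).det := by
    rw [hfact, det_mul, det_mul]
    have hs : S.det * S.det = Q.det := by rw [← det_mul, hSS]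
    rw [← hs]; ring
  rw [hdet, norm_mul]
  calc ‖Q.det‖ * ‖(1 - K).det‖
      ≤ ‖Q.det‖ * 1 := by
        gcongr
        exact abs_det_le_one hKpsd h1Kpsd
    _ = ‖Q.det‖ := mul_one _


def Sect (α : ℝ) (M : Matrix I I ℂ) : Prop :=
  ∀ x : I → ℂ, x ≠ 0 → 0 < (star x ⬝ᵥ (M *ᵥ x)).re ∧
    |(star x ⬝ᵥ (M *ᵥ x)).im| ≤ (star x ⬝ᵥ (M *ᵥ x)).re * Real.tan α

lemma reM_posDef {α : ℝ} {M : Matrix I I ℂ} (hM : Sect α M) : (ReM M).PosDef := by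
  refine PosDef.of_dotProduct_mulVec_pos (reM_isHermitian M) (fun x hx => ?_)
  rw [reM_form]
  exact Complex.zero_lt_real.mpr (hM x hx).1

lemma sect_det_bounds {M : Matrix I I ℂ} {α : ℝ} (hα0 : 0 ≤ α) (hα : α < Real.pi / 2)
    (hM : Sect α M) :
    ‖(ReM M).det‖ ≤ ‖M.det‖ ∧
    Real.cos α ^ (Fintype.card I) * ‖M.det‖ ≤ ‖(ReM M).det‖ := by
  have hcos : 0 < Real.cos α :=
    Real.cos_pos_of_mem_Ioo ⟨by linarith [Real.pi_pos], hα⟩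
  have htan : 0 ≤ Real.tan α :=
    Real.tan_nonneg_of_nonneg_of_le_pi_div_two hα0 hα.le
  set A := ReM M with hAdef
  set C := ImM M with hCdef
  have hA : A.PosDef := reM_posDef hM
  obtain ⟨S, T, hSS, hSh, hTh, hST, hTS⟩ := sqrt_package hA
  set B := T * C * T with hBdef
  have hB : B.IsHermitian := by
    have hC : Cᴴ = C := imM_isHermitian M
    show Bᴴ = B
    rw [hBdef, conjTranspose_mul, conjTranspose_mul, hTh, hC]
    simp [Matrix.mul_assoc]
  have hSBS : S * B * S = C := by
    rw [hBdef, show S * (T * C * T) * S = (S * T) * C * (T * S) by simp [Matrix.mul_assoc],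
      hST, hTS, one_mul, Matrix.mul_one]
  have hTAT : T * A * T = 1 := by
    rw [← hSS, show T * (S * S) * T = (T * S) * (S * T) by simp [Matrix.mul_assoc],
      hTS, hST, one_mul]
  have hMdecomp : M = S * (1 + Complex.I • B) * S := by
    rw [Matrix.mul_add, Matrix.add_mul, Matrix.mul_one, hSS, Matrix.mul_smul,
      Matrix.smul_mul, hSBS]
    exact decompose M
  have hdetM : M.det = A.det * (1 + Complex.I • B).det := by
    rw [hMdecomp, det_mul, det_mul]
    have hs : S.det * S.det = A.det := by rw [← det_mul, hSS]
    rw [← hs]; ring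
  -- eigenvalue bound
  set μ := hB.eigenvalues with hμdef
  have hμbound : ∀ j, |μ j| ≤ Real.tan α := by
    intro j
    set v : I → ℂ := ⇑(hB.eigenvectorBasis j) with hvdef
    set y := T *ᵥ v with hydef
    have key1 : star v ⬝ᵥ (B *ᵥ v) = star y ⬝ᵥ (C *ᵥ y) := by
      rw [hBdef, ← mulVec_mulVec, ← mulVec_mulVec, dotProduct_mulVec (star v), hydef,
        star_mulVec, hTh]
    have key2 : star y ⬝ᵥ (A *ᵥ y) = 1 := by
      rw [hydef, mulVec_mulVec, star_mulVec, hTh, ← dotProduct_mulVec, mulVec_mulVec,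
        ← Matrix.mul_assoc, hTAT, one_mulVec]
      exact onb_unit _ j
    have hyne : y ≠ 0 := by
      intro h0
      rw [h0] at key2
      simp at key2
    obtain ⟨hre, him⟩ := hM y hyne
    have hre1 : (star y ⬝ᵥ (M *ᵥ y)).re = 1 := by
      have := reM_form M y
      rw [← hAdef, key2] at this
      exact_mod_cast this.symm
    have hμval : μ j = (star y ⬝ᵥ (M *ᵥ y)).im := by
      have h1 := hB.eigenvalues_eq j
      have h2 := imM_form M y
      rw [← hCdef] at h2
      rw [hμdef, h1, ← hvdef, key1, h2]
      simp
    rw [hμval]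
    calc |(star y ⬝ᵥ (M *ᵥ y)).im| ≤ (star y ⬝ᵥ (M *ᵥ y)).re * Real.tan α := him
      _ = Real.tan α := by rw [hre1, one_mul]
  -- determinant of 1 + I•B
  set U := (hB.eigenvectorUnitary : Matrix I I ℂ) with hUdef
  have hUU : U * star U = 1 := mem_unitaryGroup_iff.mp hB.eigenvectorUnitary.2
  set D : Matrix I I ℂ := diagonal (fun j => ((μ j : ℝ) : ℂ)) with hDdef
  have hspec : B = U * D * star U := hB.spectral_theorem
  have h1IB : 1 + Complex.I • B = U * (1 + Complex.I • D) * star U := by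
    rw [Matrix.mul_add, Matrix.add_mul, Matrix.mul_one, hUU, Matrix.mul_smul,
      Matrix.smul_mul, ← hspec]
  have hdet1 : (1 + Complex.I • B).det = (1 + Complex.I • D).det := by
    rw [h1IB, det_mul, det_mul]
    have hu : U.det * (star U).det = 1 := by rw [← det_mul, hUU, det_one]
    calc U.det * (1 + Complex.I • D).det * (star U).det
        = (1 + Complex.I • D).det * (U.det * (star U).det) := by ring
      _ = (1 + Complex.I • D).det := by rw [hu, mul_one]
  have hdiag : 1 + Complex.I • D = diagonal (fun j => 1 + Complex.I * (μ j : ℂ)) := by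
    ext i j
    by_cases hij : i = j <;>
      simp [hDdef, diagonal_apply, one_apply, hij, Function.comp, Matrix.add_apply,
        Matrix.smul_apply]
  have hdet2 : (1 + Complex.I • B).det = ∏ j, (1 + Complex.I * (μ j : ℂ)) := by
    rw [hdet1, hdiag, det_diagonal]
  -- bounds on the factors
  have habs : ∀ j : I, ‖(1 + Complex.I * (μ j : ℂ))‖ ^ 2 = 1 + μ j ^ 2 := by
    intro j
    rw [Complex.sq_norm, Complex.normSq_apply]
    simp
    ring
  have hfac_lb : ∀ j : I, 1 ≤ ‖(1 + Complex.I * (μ j : ℂ))‖ := by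
    intro j
    nlinarith [habs j, norm_nonneg (1 + Complex.I * (μ j : ℂ)), sq_nonneg (μ j)]
  have hone_add_tan : 1 + Real.tan α ^ 2 = (Real.cos α)⁻¹ ^ 2 := by
    have h := Real.sin_sq_add_cos_sq α
    rw [Real.tan_eq_sin_div_cos]
    field_simp
    linarith
  have hfac_ub : ∀ j : I, ‖(1 + Complex.I * (μ j : ℂ))‖ ≤ (Real.cos α)⁻¹ := by
    intro j
    have h1 : μ j ^ 2 ≤ Real.tan α ^ 2 := by
      have := hμbound j
      nlinarith [abs_nonneg (μ j), neg_abs_le (μ j), le_abs_self (μ j)]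
    nlinarith [habs j, norm_nonneg (1 + Complex.I * (μ j : ℂ)),
      inv_pos.mpr hcos]
  -- put it together
  have hP : ‖(1 + Complex.I • B).det‖ = ∏ j, ‖(1 + Complex.I * (μ j : ℂ))‖ := by
    rw [hdet2, norm_prod]
  have hprod_lb : (1:ℝ) ≤ ∏ j, ‖(1 + Complex.I * (μ j : ℂ))‖ := by
    have := Finset.prod_le_prod (s := Finset.univ) (f := fun _ : I => (1:ℝ))
      (g := fun j => ‖(1 + Complex.I * (μ j : ℂ))‖)
      (fun j _ => zero_le_one) (fun j _ => hfac_lb j)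
    simpa using this
  have hprod_ub : ∏ j, ‖(1 + Complex.I * (μ j : ℂ))‖ ≤ (Real.cos α)⁻¹ ^ (Fintype.card I) := by
    rw [← Finset.card_univ, ← Finset.prod_const]
    exact Finset.prod_le_prod (fun j _ => norm_nonneg _) (fun j _ => hfac_ub j)
  have habsM : ‖M.det‖ = ‖A.det‖ * ‖(1 + Complex.I • B).det‖ := by
    rw [hdetM, norm_mul]
  constructor
  · rw [habsM, hP]
    nth_rewrite 1 [← mul_one (‖A.det‖)]
    exact mul_le_mul_of_nonneg_left hprod_lb (norm_nonneg _)
  · rw [habsM, hP]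
    have hcospow : 0 < Real.cos α ^ (Fintype.card I) := pow_pos hcos _
    rw [show Real.cos α ^ Fintype.card I * (‖A.det‖ * ∏ j, ‖(1 + Complex.I * (μ j : ℂ))‖)
        = ‖A.det‖ * (Real.cos α ^ Fintype.card I * ∏ j, ‖(1 + Complex.I * (μ j : ℂ))‖) by ring]
    nth_rewrite 2 [← mul_one (‖A.det‖)]
    refine mul_le_mul_of_nonneg_left ?_ (norm_nonneg _)
    calc Real.cos α ^ Fintype.card I * ∏ j, ‖(1 + Complex.I * (μ j : ℂ))‖
        ≤ Real.cos α ^ Fintype.card I * (Real.cos α)⁻¹ ^ (Fintype.card I) := by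
          exact mul_le_mul_of_nonneg_left hprod_ub (le_of_lt hcospow)
      _ = 1 := by
          rw [← mul_pow, mul_inv_cancel₀ hcos.ne', one_pow]



variable {p q : Type*} [Fintype p] [DecidableEq p] [Fintype q] [DecidableEq q]

lemma posDef_submatrix_equiv {J : Type*} [Fintype J] [DecidableEq J] (e : J ≃ I)
    {A : Matrix I I ℂ} (hA : A.PosDef) : (A.submatrix e e).PosDef := by
  refine PosDef.of_dotProduct_mulVec_pos ?_ ?_
  · show (A.submatrix e e)ᴴ = A.submatrix e e
    rw [conjTranspose_submatrix, hA.1.eq]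
  · intro x hx
    have hx' : (x ∘ e.symm) ≠ 0 := by
      intro h0
      apply hx
      funext j
      have := congrFun h0 (e j)
      simpa using this
    have key : star x ⬝ᵥ (A.submatrix e e *ᵥ x) = star (x ∘ e.symm) ⬝ᵥ (A *ᵥ (x ∘ e.symm)) := by
      rw [submatrix_mulVec_equiv]
      exact Fintype.sum_equiv e _ _ (fun j => by simp [Function.comp])
    rw [key]
    exact hA.dotProduct_mulVec_pos hx'

variable {p q : Type*} [Fintype p] [DecidableEq p] [Fintype q] [DecidableEq q]

lemma star_sum_elim_left (x : p → ℂ) :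
    star (Sum.elim x (0 : q → ℂ)) = Sum.elim (star x) (0 : q → ℂ) := by
  funext j; cases j <;> simp

lemma star_sum_elim_right (x : q → ℂ) :
    star (Sum.elim (0 : p → ℂ) x) = Sum.elim (0 : p → ℂ) (star x) := by
  funext j; cases j <;> simp

lemma posDef_toBlocks₁₁ {A : Matrix (p ⊕ q) (p ⊕ q) ℂ} (hA : A.PosDef) :
    A.toBlocks₁₁.PosDef := by
  refine PosDef.of_dotProduct_mulVec_pos ?_ ?_
  · show A.toBlocks₁₁ᴴ = A.toBlocks₁₁
    ext l m
    simp only [conjTranspose_apply, toBlocks₁₁, of_apply]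
    exact hA.1.apply _ _
  · intro x hx
    have hx' : Sum.elim x (0 : q → ℂ) ≠ 0 := by
      intro h0
      apply hx
      funext l
      exact congrFun h0 (Sum.inl l)
    have := hA.dotProduct_mulVec_pos hx'
    rw [show A = fromBlocks A.toBlocks₁₁ A.toBlocks₁₂ A.toBlocks₂₁ A.toBlocks₂₂ from
        (fromBlocks_toBlocks A).symm, fromBlocks_mulVec] at this
    simp only [Sum.elim_comp_inl, Sum.elim_comp_inr, mulVec_zero, add_zero] at this
    rwa [star_sum_elim_left, sumElim_dotProduct_sumElim, zero_dotProduct, add_zero] at this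
  
lemma posDef_toBlocks₂₂ {A : Matrix (p ⊕ q) (p ⊕ q) ℂ} (hA : A.PosDef) :
    A.toBlocks₂₂.PosDef := by
  refine PosDef.of_dotProduct_mulVec_pos ?_ ?_
  · show A.toBlocks₂₂ᴴ = A.toBlocks₂₂
    ext l m
    simp only [conjTranspose_apply, toBlocks₂₂, of_apply]
    exact hA.1.apply _ _
  · intro x hx
    have hx' : Sum.elim (0 : p → ℂ) x ≠ 0 := by
      intro h0
      apply hx
      funext l
      exact congrFun h0 (Sum.inr l)
    have := hA.dotProduct_mulVec_pos hx'
    rw [show A = fromBlocks A.toBlocks₁₁ A.toBlocks₁₂ A.toBlocks₂₁ A.toBlocks₂₂ from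
        (fromBlocks_toBlocks A).symm, fromBlocks_mulVec] at this
    simp only [Sum.elim_comp_inl, Sum.elim_comp_inr, mulVec_zero, zero_add] at this
    rwa [star_sum_elim_right, sumElim_dotProduct_sumElim, zero_dotProduct, zero_add] at this

lemma fischer_step {A : Matrix (p ⊕ q) (p ⊕ q) ℂ} (hA : A.PosDef) :
    ‖A.det‖ ≤ ‖A.toBlocks₁₁.det‖ * ‖A.toBlocks₂₂.det‖ := by
  have hA11 : A.toBlocks₁₁.PosDef := posDef_toBlocks₁₁ hA
  have hA22 : A.toBlocks₂₂.PosDef := posDef_toBlocks₂₂ hA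
  have hA21 : A.toBlocks₂₁ = A.toBlocks₁₂ᴴ := by
    ext l m
    simp only [toBlocks₂₁, toBlocks₁₂, conjTranspose_apply, of_apply]
    exact (hA.1.apply _ _).symm
  haveI := hA22.isUnit.invertible
  have hfb : A = fromBlocks A.toBlocks₁₁ A.toBlocks₁₂ A.toBlocks₂₁ A.toBlocks₂₂ :=
    (fromBlocks_toBlocks A).symm
  have hdet : A.det = A.toBlocks₂₂.det *
      (A.toBlocks₁₁ - A.toBlocks₁₂ * A.toBlocks₂₂⁻¹ * A.toBlocks₂₁).det := by
    conv_lhs => rw [hfb]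
    rw [det_fromBlocks₂₂, invOf_eq_nonsing_inv]
  have hR : (A.toBlocks₁₂ * A.toBlocks₂₂⁻¹ * A.toBlocks₁₂ᴴ).PosSemidef :=
    hA22.inv.posSemidef.mul_mul_conjTranspose_same A.toBlocks₁₂
  have hSchur : (A.toBlocks₁₁ - A.toBlocks₁₂ * A.toBlocks₂₂⁻¹ * A.toBlocks₁₂ᴴ).PosSemidef := by
    rw [← PosDef.fromBlocks₂₂ _ _ hA22]
    rw [← hA21, ← hfb]
    exact hA.posSemidef
  rw [hdet, norm_mul, mul_comm (‖A.toBlocks₁₁.det‖)]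
  refine mul_le_mul_of_nonneg_left ?_ (norm_nonneg _)
  rw [hA21]
  exact abs_det_sub_le hA11 hR hSchur

/-- the splitting equivalence -/
def be (n k : ℕ) : (Fin n × Fin k) ⊕ Fin k ≃ Fin (n+1) × Fin k where
  toFun := Sum.elim (fun p => (p.1.castSucc, p.2)) (fun l => (Fin.last n, l))
  invFun p := Fin.lastCases (Sum.inr p.2) (fun i => Sum.inl (i, p.2)) p.1
  left_inv := by rintro (⟨i,l⟩|l) <;> simp
  right_inv := by
    rintro ⟨i,l⟩
    induction i using Fin.lastCases <;> simp

lemma fischer {k : ℕ} : ∀ (n : ℕ) (A : Matrix (Fin n × Fin k) (Fin n × Fin k) ℂ), A.PosDef →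
    ‖A.det‖ ≤
      ∏ i : Fin n, ‖(Matrix.of fun l m : Fin k => A (i,l) (i,m)).det‖ := by
  intro n
  induction n with
  | zero =>
    intro A hA
    rw [det_isEmpty]
    simp
  | succ n ih =>
    intro A hA
    set e := be n k with hedef
    set A' := A.submatrix e e with hA'def
    have hA' : A'.PosDef := posDef_submatrix_equiv e hA
    have hdet : A'.det = A.det := det_submatrix_equiv_self e A
    have hstep := fischer_step hA'
    have h11 : ∀ i : Fin n, (Matrix.of fun l m : Fin k => A'.toBlocks₁₁ (i,l) (i,m))
        = (Matrix.of fun l m : Fin k => A (i.castSucc, l) (i.castSucc, m)) := by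
      intro i; ext l m; rfl
    have h22 : A'.toBlocks₂₂ = (Matrix.of fun l m : Fin k => A (Fin.last n, l) (Fin.last n, m)) := by
      ext l m; rfl
    have hih := ih A'.toBlocks₁₁ (posDef_toBlocks₁₁ hA')
    calc ‖A.det‖ = ‖A'.det‖ := by rw [hdet]
      _ ≤ ‖A'.toBlocks₁₁.det‖ * ‖A'.toBlocks₂₂.det‖ := hstep
      _ ≤ (∏ i : Fin n, ‖(Matrix.of fun l m : Fin k => A (i.castSucc, l) (i.castSucc, m)).det‖)
            * ‖(Matrix.of fun l m : Fin k => A (Fin.last n, l) (Fin.last n, m)).det‖ := by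
          rw [← h22]
          refine mul_le_mul_of_nonneg_right ?_ (norm_nonneg _)
          calc ‖A'.toBlocks₁₁.det‖
              ≤ ∏ i : Fin n, ‖(Matrix.of fun l m : Fin k => A'.toBlocks₁₁ (i,l) (i,m)).det‖ := hih
            _ = _ := by
                refine Finset.prod_congr rfl (fun i _ => ?_)
                rw [h11]
      _ = ∏ i : Fin (n+1), ‖(Matrix.of fun l m : Fin k => A (i, l) (i, m)).det‖ := by
          rw [Fin.prod_univ_castSucc]


/-- from the numerical range hypothesis to the all-vectors sector condition -/
lemma sect_of_numRange {α : ℝ} {M : Matrix I I ℂ} (h : numRange M ⊆ sector α) :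
    Sect α M := by
  intro x hx
  set c := star x ⬝ᵥ x with hc
  have hcpos : 0 < c := dotProduct_star_self_pos_iff.mpr hx
  have hcim : c.im = 0 := by
    have := hcpos.le
    rw [Complex.le_def] at this
    simpa using this.2.symm
  have hcre : 0 < c.re := by
    rw [Complex.lt_def] at hcpos
    simpa using hcpos.1
  set s : ℝ := (Real.sqrt c.re)⁻¹ with hs
  have hs2 : s * s * c.re = 1 := by
    rw [hs, ← Real.sqrt_mul_self hcre.le]
    have h0 : Real.sqrt c.re ≠ 0 := by positivity
    field_simp
    rw [Real.sq_sqrt (Real.sqrt_nonneg _)]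
  set u : I → ℂ := (s : ℂ) • x with hu
  have hstaru : star u = (s : ℂ) • star x := by
    rw [hu, star_smul]
    congr 1
    simp [Complex.conj_ofReal]
  have hunit : star u ⬝ᵥ u = 1 := by
    rw [hu, hstaru, smul_dotProduct, dotProduct_smul, ← hc, smul_eq_mul, smul_eq_mul]
    have : c = (c.re : ℂ) := Complex.ext rfl (by simp [hcim])
    rw [this]
    push_cast
    rw [show (s:ℂ) * ((s:ℂ) * (c.re:ℂ)) = ((s * s * c.re : ℝ) : ℂ) by push_cast; ring, hs2]
    norm_num
  have hmem : star u ⬝ᵥ (M *ᵥ u) ∈ sector α := h ⟨u, hunit, rfl⟩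
  set q := star x ⬝ᵥ (M *ᵥ x) with hq
  have hform : star u ⬝ᵥ (M *ᵥ u) = ((s*s : ℝ) : ℂ) * q := by
    rw [hu, hstaru, mulVec_smul, smul_dotProduct, dotProduct_smul, smul_eq_mul, smul_eq_mul, ← hq]
    push_cast
    ring
  obtain ⟨h1, h2⟩ := hmem
  rw [hform] at h1 h2
  have hre : (((s*s : ℝ) : ℂ) * q).re = (s*s) * q.re := by
    simp [Complex.mul_re]
  have him : (((s*s : ℝ) : ℂ) * q).im = (s*s) * q.im := by
    simp [Complex.mul_im]
  rw [hre] at h1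
  rw [him, hre] at h2
  have hss : 0 < s * s := by
    have h0 : 0 < Real.sqrt c.re := Real.sqrt_pos.mpr hcre
    rw [hs]
    positivity
  constructor
  · nlinarith
  · rw [abs_mul, abs_of_pos hss,
      show s * s * q.re * Real.tan α = s * s * (q.re * Real.tan α) by ring] at h2
    exact le_of_mul_le_mul_left h2 hss

/-- the sector condition passes to diagonal blocks -/
lemma sect_block {α : ℝ} {n k : ℕ} {H : Matrix (Fin n × Fin k) (Fin n × Fin k) ℂ}
    (hH : Sect α H) (i : Fin n) :
    Sect α (Matrix.of fun l m : Fin k => H (i, l) (i, m)) := by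
  intro x hx
  set xt : Fin n × Fin k → ℂ := fun p => if p.1 = i then x p.2 else 0 with hxt
  have hxtne : xt ≠ 0 := by
    intro h0
    apply hx
    funext l
    have := congrFun h0 (i, l)
    simpa [hxt] using this
  have expand : ∀ (w : Fin n × Fin k → ℂ),
      (star xt) ⬝ᵥ w = ∑ b, (starRingEnd ℂ) (x b) * w (i, b) := by
    intro w
    rw [dotProduct, Fintype.sum_prod_type]
    rw [Finset.sum_eq_single i (fun a _ ha => ?_) (fun h => absurd (Finset.mem_univ i) h)]
    · refine Finset.sum_congr rfl (fun b _ => ?_)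
      congr 1
      simp [hxt]
    · exact Finset.sum_eq_zero (fun b _ => by simp [hxt, ha])
  have hmv : ∀ p : Fin n × Fin k, (H *ᵥ xt) p = ∑ d, H p (i, d) * x d := by
    intro p
    show (H p) ⬝ᵥ xt = _
    rw [dotProduct, Fintype.sum_prod_type]
    rw [Finset.sum_eq_single i (fun c _ hc => ?_) (fun h => absurd (Finset.mem_univ i) h)]
    · refine Finset.sum_congr rfl (fun d _ => ?_)
      simp [hxt]
    · exact Finset.sum_eq_zero (fun d _ => by simp [hxt, hc])
  have hform : star xt ⬝ᵥ (H *ᵥ xt) =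
      star x ⬝ᵥ ((Matrix.of fun l m : Fin k => H (i, l) (i, m)) *ᵥ x) := by
    calc star xt ⬝ᵥ (H *ᵥ xt)
        = ∑ b, (starRingEnd ℂ) (x b) * (H *ᵥ xt) (i, b) := expand _
      _ = ∑ b, (starRingEnd ℂ) (x b) * ∑ d, H (i,b) (i,d) * x d :=
          Finset.sum_congr rfl (fun b _ => by rw [hmv])
      _ = star x ⬝ᵥ ((Matrix.of fun l m : Fin k => H (i, l) (i, m)) *ᵥ x) := by
          simp [dotProduct, mulVec, Matrix.of_apply]
  obtain ⟨h1, h2⟩ := hH xt hxtne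
  rw [hform] at h1 h2
  exact ⟨h1, h2⟩

/-- ReM commutes with taking diagonal blocks -/
lemma reM_block {n k : ℕ} (H : Matrix (Fin n × Fin k) (Fin n × Fin k) ℂ) (i : Fin n) :
    (Matrix.of fun l m : Fin k => (ReM H) (i, l) (i, m)) =
      ReM (Matrix.of fun l m : Fin k => H (i, l) (i, m)) := by
  ext l m
  simp [ReM, Matrix.add_apply, Matrix.smul_apply, conjTranspose_apply, Matrix.of_apply]

/-- AM-GM -/
lemma amgm {n : ℕ} (hn : 0 < n) (z : Fin n → ℝ) (hz : ∀ i, 0 ≤ z i) :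
    ∏ i, z i ≤ ((∑ i, z i) / n) ^ n := by
  have hw : ∑ _i : Fin n, (n : ℝ)⁻¹ = 1 := by
    rw [Finset.sum_const, Finset.card_univ, Fintype.card_fin, nsmul_eq_mul]
    field_simp
  have key := Real.geom_mean_le_arith_mean_weighted Finset.univ (fun _ => (n:ℝ)⁻¹) z
    (fun i _ => by positivity) hw (fun i _ => hz i)
  have hprod : ∏ i, z i ^ ((n:ℝ)⁻¹) = (∏ i, z i) ^ ((n:ℝ)⁻¹) := by
    rw [← Real.finset_prod_rpow Finset.univ z (fun i _ => hz i)]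
  have hsum : ∑ i, (n:ℝ)⁻¹ * z i = (∑ i, z i) / n := by
    rw [← Finset.mul_sum]
    ring
  rw [hprod, hsum] at key
  have hpow := pow_le_pow_left₀ (Real.rpow_nonneg (Finset.prod_nonneg (fun i _ => hz i)) _) key n
  rwa [← Real.rpow_natCast ((∏ i, z i) ^ ((n:ℝ)⁻¹)) n, ← Real.rpow_mul (Finset.prod_nonneg (fun i _ => hz i)),
    inv_mul_cancel₀ (by exact_mod_cast hn.ne' : (n:ℝ) ≠ 0), Real.rpow_one] at hpow


end Stmt10Aux

open Stmt10Aux in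
/-- Theorem 2.6 (second inequality): ((Σ|det H_{i,i}|)/n)^n ≥ (cos α)^{nk}|det H|. -/
theorem stmt10 {n k : ℕ} (hn : 0 < n) (hk : 0 < k) {α : ℝ}
    (hα0 : 0 ≤ α) (hα : α < Real.pi / 2)
    (H : Matrix (Fin n × Fin k) (Fin n × Fin k) ℂ)
    (hH : numRange H ⊆ sector α) :
    ((∑ i : Fin n, ‖(Matrix.of fun l m : Fin k => H (i, l) (i, m)).det‖) / n) ^ n ≥
      Real.cos α ^ (n * k) * ‖H.det‖ := by
  have hsect : Sect α H := sect_of_numRange hH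
  have hb1 := (sect_det_bounds hα0 hα hsect).2
  have hcard : Fintype.card (Fin n × Fin k) = n * k := by simp
  rw [hcard] at hb1
  have hfj := fischer n (ReM H) (reM_posDef hsect)
  have hblocks : ∀ i : Fin n,
      ‖(Matrix.of fun l m : Fin k => (ReM H) (i,l) (i,m)).det‖ ≤
      ‖(Matrix.of fun l m : Fin k => H (i,l) (i,m)).det‖ := by
    intro i
    rw [reM_block]
    exact (sect_det_bounds hα0 hα (sect_block hsect i)).1
  have hprod : (∏ i : Fin n, ‖(Matrix.of fun l m : Fin k => (ReM H) (i,l) (i,m)).det‖)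
      ≤ ∏ i : Fin n, ‖(Matrix.of fun l m : Fin k => H (i,l) (i,m)).det‖ :=
    Finset.prod_le_prod (fun i _ => norm_nonneg _) (fun i _ => hblocks i)
  have hamgm := amgm hn (fun i => ‖(Matrix.of fun l m : Fin k => H (i,l) (i,m)).det‖)
    (fun i => norm_nonneg _)
  calc Real.cos α ^ (n * k) * ‖H.det‖
      ≤ ‖(ReM H).det‖ := hb1
    _ ≤ ∏ i : Fin n, ‖(Matrix.of fun l m : Fin k => (ReM H) (i,l) (i,m)).det‖ := hfj
    _ ≤ ∏ i : Fin n, ‖(Matrix.of fun l m : Fin k => H (i,l) (i,m)).det‖ := hprod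
    _ ≤ _ := hamgm
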